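/- Let S and S_i (i ∈ ℕ) be compact convex subsets of ℝ^n with nonempty interior such that S_i converges to S in Hausdorff distance, and let φ_i : S_i → [0,1] be concave functions. Then there exist a concave function φ : S → [0,1] and a subsequence (i_j) such that: (i) on every compact subset K of the interior of S, φ_{i_j} converges uniformly to φ (the φ_{i_j} being defined on K for j large enough); and (ii) for every x ∈ ∂S and every sequence x_j ∈ S_{i_j} converging to x, limsup_{j→∞} φ_{i_j}(x_j) ≤ φ(x). -/

import Mathlib

open Set MeasureTheory Metric Filter Topology
open RealInnerProductSpace

lemma key_incl {n : ℕ} {C : Set (EuclideanSpace ℝ (Fin n))} (hCc : IsCompact C) (hC : Convex ℝ C)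
    (hCne : C.Nonempty) {x : EuclideanSpace ℝ (Fin n)} {ρ δ : ℝ} (hδ0 : 0 ≤ δ) (hδρ : δ < ρ)
    (h : ∀ y ∈ ball x ρ, infDist y C ≤ δ) : x ∈ C := by
  by_contra hx
  obtain ⟨c, hcC, hc⟩ := hCc.exists_infDist_eq_dist hCne x
  have hobt : ∀ a ∈ C, ⟪x - c, a - c⟫ ≤ (0:ℝ) := by
    rw [← norm_eq_iInf_iff_real_inner_le_zero hC hcC]
    rw [dist_eq_norm] at hc
    rw [← hc, infDist_eq_iInf]
    simp_rw [dist_eq_norm]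
  have hxc : x ≠ c := fun h => hx (h ▸ hcC)
  have hd : (0:ℝ) < ‖x - c‖ := by rw [norm_pos_iff]; exact sub_ne_zero.2 hxc
  set d := ‖x - c‖ with hdd
  set u : EuclideanSpace ℝ (Fin n) := d⁻¹ • (x - c) with hu
  have hnu : ‖u‖ = 1 := by
    rw [hu, norm_smul, norm_inv, Real.norm_eq_abs, abs_of_pos hd, inv_mul_cancel₀ hd.ne']
  set s := (δ + ρ)/2 with hs
  have hδs : δ < s := by rw [hs]; linarith
  have hsρ : s < ρ := by rw [hs]; linarith
  set p := x + s • u with hp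
  have hpball : p ∈ ball x ρ := by
    rw [mem_ball, dist_eq_norm, hp, add_sub_cancel_left, norm_smul, hnu, mul_one,
      Real.norm_eq_abs, abs_of_pos (lt_of_le_of_lt hδ0 hδs)]
    exact hsρ
  have hle := h p hpball
  have hlt : infDist p C < s := lt_of_le_of_lt hle hδs
  obtain ⟨a, haC, hpa⟩ := (infDist_lt_iff hCne).1 hlt
  have h1 : ⟪x - c, u⟫ = (d:ℝ) := by
    rw [hu, real_inner_smul_right, real_inner_self_eq_norm_sq]
    field_simp [hdd]; ring
  have h2 : (0:ℝ) ≤ ⟪c - a, u⟫ := by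
    have hob := hobt a haC
    have h4 : ⟪c - a, x - c⟫ = - ⟪x - c, a - c⟫ := by
      have hca : (c - a : EuclideanSpace ℝ (Fin n)) = -(a - c) := by abel
      rw [hca, inner_neg_left, real_inner_comm]
    have h5 : (0:ℝ) ≤ ⟪c - a, x - c⟫ := by rw [h4]; linarith
    have : ⟪c - a, u⟫ = d⁻¹ * ⟪c - a, x - c⟫ := by rw [hu, real_inner_smul_right]
    rw [this]
    positivity
  have h3 : ⟪s • u, u⟫ = s := by
    rw [real_inner_smul_left, real_inner_self_eq_norm_sq, hnu]; ring
  have hdecomp : p - a = (x - c) + (c - a) + s • u := by rw [hp]; abel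
  have hip : d + s ≤ ⟪p - a, u⟫ := by
    rw [hdecomp, inner_add_left, inner_add_left, h1, h3]; linarith
  have hcs : ⟪p - a, u⟫ ≤ ‖p - a‖ := by
    calc ⟪p - a, u⟫ ≤ ‖p - a‖ * ‖u‖ := real_inner_le_norm _ _
    _ = ‖p - a‖ := by rw [hnu, mul_one]
  rw [dist_eq_norm] at hpa
  linarith

lemma concave_lip {n : ℕ} {C : Set (EuclideanSpace ℝ (Fin n))} {f : EuclideanSpace ℝ (Fin n) → ℝ}
    (hf : ConcaveOn ℝ C f) (h01 : ∀ x ∈ C, f x ∈ Icc (0:ℝ) 1)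
    {x : EuclideanSpace ℝ (Fin n)} {r : ℝ} (hr : 0 < r) (hball : closedBall x (2*r) ⊆ C) :
    ∀ y ∈ closedBall x r, ∀ y' ∈ closedBall x r, f y - f y' ≤ dist y y' / r := by
  intro y hy y' hy'
  rcases eq_or_ne y y' with rfl | hne
  · simp
  set d := dist y y' with hdd
  have hd : 0 < d := dist_pos.2 hne
  set w : EuclideanSpace ℝ (Fin n) := y' + (r/d) • (y' - y) with hw
  have hyC : y ∈ C := hball (closedBall_subset_closedBall (by linarith) hy)
  have hwC : w ∈ C := by
    apply hball
    rw [mem_closedBall]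
    have htr : dist w x ≤ dist w y' + dist y' x := dist_triangle _ _ _
    have h1 : dist w y' = r := by
      rw [hw, dist_eq_norm, add_sub_cancel_left, norm_smul, Real.norm_eq_abs,
        abs_of_pos (by positivity : (0:ℝ) < r/d)]
      rw [← dist_eq_norm, dist_comm, ← hdd]
      field_simp
    rw [mem_closedBall] at hy'
    linarith
  set t := d / (d + r) with ht
  have ht0 : 0 < t := by positivity
  have ht1 : t < 1 := by rw [ht]; rw [div_lt_one (by positivity)]; linarith
  have hcomb : (1 - t) • y + t • w = y' := by
    have htr : t * (r/d) = 1 - t := by rw [ht]; field_simp; ring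
    rw [hw, smul_add, smul_smul, htr, smul_sub]
    module
  have hconc := hf.2 hyC hwC (by linarith : (0:ℝ) ≤ 1 - t) ht0.le (by ring)
  rw [hcomb] at hconc
  have hfw := (h01 w hwC).1
  have hfy := (h01 y hyC).2
  have hkey : f y - f y' ≤ t := by
    have : (1-t) * f y + t * f w ≤ f y' := hconc
    nlinarith
  have htd : t ≤ d / r := by
    rw [ht, div_le_div_iff₀ (by positivity) hr]
    nlinarith
  calc f y - f y' ≤ t := hkey
  _ ≤ d / r := htd

set_option maxHeartbeats 1000000 in
theorem concave_functions_compactness_on_converging_bodies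
    (n : ℕ)
    (S : Set (EuclideanSpace ℝ (Fin n)))
    (Si : ℕ → Set (EuclideanSpace ℝ (Fin n)))
    (hS_compact : IsCompact S) (hS_conv : Convex ℝ S) (hS_int : (interior S).Nonempty)
    (hSi_compact : ∀ i, IsCompact (Si i)) (hSi_conv : ∀ i, Convex ℝ (Si i))
    (hSi_int : ∀ i, (interior (Si i)).Nonempty)
    (hconv : Tendsto (fun i => hausdorffDist (Si i) S) atTop (nhds 0))
    (φi : ℕ → EuclideanSpace ℝ (Fin n) → ℝ)
    (hφi_range : ∀ i, ∀ x ∈ Si i, φi i x ∈ Icc (0 : ℝ) 1)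
    (hφi_conc : ∀ i, ConcaveOn ℝ (Si i) (φi i)) :
    ∃ (φ : EuclideanSpace ℝ (Fin n) → ℝ) (idx : ℕ → ℕ), StrictMono idx ∧
      (∀ x ∈ S, φ x ∈ Icc (0 : ℝ) 1) ∧
      ConcaveOn ℝ S φ ∧
      (∀ K : Set (EuclideanSpace ℝ (Fin n)), K ⊆ interior S → IsCompact K →
        TendstoUniformlyOn (fun j => φi (idx j)) φ atTop K) ∧
      (∀ x ∈ frontier S, ∀ xj : ℕ → EuclideanSpace ℝ (Fin n),
        (∀ j, xj j ∈ Si (idx j)) → Tendsto xj atTop (nhds x) →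
          limsup (fun j => φi (idx j) (xj j)) atTop ≤ φ x) := by
  classical
  have hSne : S.Nonempty := hS_int.mono interior_subset
  have hSine : ∀ i, (Si i).Nonempty := fun i => (hSi_int i).mono interior_subset
  have hEdist : ∀ i, EMetric.hausdorffEdist S (Si i) ≠ ⊤ := fun i =>
    Metric.hausdorffEdist_ne_top_of_nonempty_of_bounded hSne (hSine i)
      hS_compact.isBounded (hSi_compact i).isBounded
  -- margin lemma
  have hmargin : ∀ K : Set (EuclideanSpace ℝ (Fin n)), K ⊆ interior S → IsCompact K →
      ∃ r > 0, (∀ y ∈ K, closedBall y (2*r) ⊆ interior S) ∧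
        ∀ᶠ i in atTop, ∀ y ∈ K, closedBall y (2*r) ⊆ Si i := by
    intro K hKint hKcomp
    obtain ⟨δ, hδ0, hδ⟩ := hKcomp.exists_cthickening_subset_open isOpen_interior hKint
    refine ⟨δ/8, by positivity, ?_, ?_⟩
    · intro y hy w hw
      apply hδ
      apply closedBall_subset_cthickening hy δ
      exact closedBall_subset_closedBall (by linarith) hw
    · have hev : ∀ᶠ i in atTop, hausdorffDist (Si i) S < δ/8 :=
        hconv.eventually_lt_const (by positivity)
      filter_upwards [hev] with i hi
      intro y hy w hw
      apply key_incl (hSi_compact i) (hSi_conv i) (hSine i)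
        hausdorffDist_nonneg (show hausdorffDist (Si i) S < δ/4 by linarith)
      intro v hv
      have hvS : v ∈ S := by
        apply interior_subset
        apply hδ
        apply closedBall_subset_cthickening hy δ
        rw [mem_closedBall]
        rw [mem_ball] at hv
        rw [mem_closedBall] at hw
        calc dist v y ≤ dist v w + dist w y := dist_triangle _ _ _
        _ ≤ δ/4 + 2*(δ/8) := by linarith
        _ ≤ δ := by linarith
      have h5 : infDist v (Si i) ≤ hausdorffDist S (Si i) :=
        infDist_le_hausdorffDist_of_mem hvS (hEdist i)
      rwa [hausdorffDist_comm] at h5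
  obtain ⟨z, hz⟩ := hS_int
  obtain ⟨rz, hrz0, hrzint, hrzev⟩ := hmargin {z} (singleton_subset_iff.2 hz) isCompact_singleton
  -- countable dense subset of the interior
  haveI : Nonempty ↥(interior S) := ⟨⟨z, hz⟩⟩
  obtain ⟨T, hTc, hTd⟩ := TopologicalSpace.exists_countable_dense ↥(interior S)
  obtain ⟨D', hD'⟩ := hTc.exists_eq_range hTd.nonempty
  set D : ℕ → EuclideanSpace ℝ (Fin n) := fun k => (D' k : EuclideanSpace ℝ (Fin n)) with hD
  have hD1 : ∀ k, D k ∈ interior S := fun k => (D' k).2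
  have hD2 : ∀ x ∈ interior S, ∀ ε > 0, ∃ k, dist x (D k) < ε := by
    intro x hx ε hε
    have := hTd ⟨x, hx⟩
    rw [Metric.mem_closure_iff] at this
    obtain ⟨b, hbT, hb⟩ := this ε hε
    rw [hD'] at hbT
    obtain ⟨k, hk⟩ := hbT
    refine ⟨k, ?_⟩
    rw [Subtype.dist_eq] at hb
    rw [hD]
    simp only
    rw [hk]
    exact hb
  -- extraction of a subsequence converging at all D k
  set F : ℕ → ℕ → ↥(Icc (0:ℝ) 1) := fun i k => Set.projIcc 0 1 zero_le_one (φi i (D k)) with hF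
  obtain ⟨g, -, σ, hσmono, hσtend⟩ := isCompact_univ.tendsto_subseq (x := F) (fun i => mem_univ _)
  have hσ_at : Tendsto σ atTop atTop := hσmono.tendsto_atTop
  have hσtend' : ∀ k, Tendsto (fun j => ((F (σ j) k : ℝ))) atTop (𝓝 (g k : ℝ)) := by
    intro k
    have h1 := tendsto_pi_nhds.1 hσtend k
    exact (continuous_subtype_val.tendsto (g k)).comp h1
  have hmemev : ∀ x ∈ interior S, ∀ᶠ j in atTop, x ∈ Si (σ j) := by
    intro x hx
    obtain ⟨r, hr0, -, hev⟩ := hmargin {x} (singleton_subset_iff.2 hx) isCompact_singleton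
    filter_upwards [hσ_at.eventually hev] with j hj
    exact hj x rfl (mem_closedBall_self (by positivity))
  have hDk_lim : ∀ k, Tendsto (fun j => φi (σ j) (D k)) atTop (𝓝 (g k : ℝ)) := by
    intro k
    apply Tendsto.congr' _ (hσtend' k)
    filter_upwards [hmemev (D k) (hD1 k)] with j hj
    rw [hF]
    simp only
    rw [Set.projIcc_of_mem zero_le_one (hφi_range (σ j) (D k) hj)]
  -- pointwise convergence on the interior
  set φ0 : EuclideanSpace ℝ (Fin n) → ℝ := fun x => limUnder atTop (fun j => φi (σ j) x) with hφ0
  have hptws : ∀ x ∈ interior S, Tendsto (fun j => φi (σ j) x) atTop (𝓝 (φ0 x)) := by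
    intro x hx
    suffices h : ∃ c, Tendsto (fun j => φi (σ j) x) atTop (𝓝 c) by
      obtain ⟨c, hc⟩ := h
      rw [hφ0]
      simp only
      rwa [hc.limUnder_eq]
    apply cauchySeq_tendsto_of_complete
    rw [Metric.cauchySeq_iff]
    intro ε hε
    obtain ⟨r, hr0, -, hev⟩ := hmargin {x} (singleton_subset_iff.2 hx) isCompact_singleton
    obtain ⟨k, hk⟩ := hD2 x hx (min r (ε*r/8)) (lt_min hr0 (by positivity))
    obtain ⟨N1, hN1⟩ := eventually_atTop.1 (hσ_at.eventually hev)
    have hC := (hDk_lim k).cauchySeq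
    rw [Metric.cauchySeq_iff] at hC
    obtain ⟨N2, hN2⟩ := hC (ε/2) (by positivity)
    refine ⟨max N1 N2, ?_⟩
    have hlip : ∀ j ≥ N1, |φi (σ j) x - φi (σ j) (D k)| ≤ ε/4 := by
      intro j hj
      have hsub : closedBall x (2*r) ⊆ Si (σ j) := hN1 j hj x rfl
      have hxm : x ∈ closedBall x r := mem_closedBall_self hr0.le
      have hDm : D k ∈ closedBall x r := by
        rw [mem_closedBall, dist_comm]
        exact le_of_lt (lt_of_lt_of_le hk (min_le_left _ _))
      have hbd : dist x (D k) / r ≤ ε/4 := by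
        rw [div_le_iff₀ hr0]
        have := lt_of_lt_of_le hk (min_le_right _ _)
        nlinarith
      have h1 := concave_lip (hφi_conc (σ j)) (hφi_range (σ j)) hr0 hsub x hxm (D k) hDm
      have h2 := concave_lip (hφi_conc (σ j)) (hφi_range (σ j)) hr0 hsub (D k) hDm x hxm
      rw [dist_comm (D k) x] at h2
      rw [abs_sub_le_iff]
      constructor <;> linarith
    intro m hm l hl
    have hm1 : N1 ≤ m := le_trans (le_max_left _ _) hm
    have hl1 : N1 ≤ l := le_trans (le_max_left _ _) hl
    have hm2 : N2 ≤ m := le_trans (le_max_right _ _) hm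
    have hl2 : N2 ≤ l := le_trans (le_max_right _ _) hl
    have h3 := hN2 m hm2 l hl2
    have h4 := hlip m hm1
    have h5 := hlip l hl1
    rw [Real.dist_eq] at h3 ⊢
    have := abs_sub_le (φi (σ m) x) (φi (σ m) (D k)) (φi (σ l) x)
    have := abs_sub_le (φi (σ m) (D k)) (φi (σ l) (D k)) (φi (σ l) x)
    have h6 := abs_sub_le (φi (σ l) (D k)) (φi (σ l) x) (φi (σ l) x)
    have h7 : |φi (σ l) (D k) - φi (σ l) x| ≤ ε/4 := by rw [abs_sub_comm]; exact h5
    calc |φi (σ m) x - φi (σ l) x| ≤ |φi (σ m) x - φi (σ m) (D k)| + |φi (σ m) (D k) - φi (σ l) x| :=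
          abs_sub_le _ _ _
      _ ≤ |φi (σ m) x - φi (σ m) (D k)| + (|φi (σ m) (D k) - φi (σ l) (D k)| + |φi (σ l) (D k) - φi (σ l) x|) := by
          have := abs_sub_le (φi (σ m) (D k)) (φi (σ l) (D k)) (φi (σ l) x)
          linarith
      _ < ε := by linarith
  have hφ0_Icc : ∀ x ∈ interior S, φ0 x ∈ Icc (0:ℝ) 1 := by
    intro x hx
    have h := hptws x hx
    have hev : ∀ᶠ j in atTop, φi (σ j) x ∈ Icc (0:ℝ) 1 := by
      filter_upwards [hmemev x hx] with j hj using hφi_range (σ j) x hj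
    exact ⟨ge_of_tendsto h (hev.mono fun j hj => hj.1),
           le_of_tendsto h (hev.mono fun j hj => hj.2)⟩
  have hφ0_conc : ConcaveOn ℝ (interior S) φ0 := by
    refine ⟨hS_conv.interior, ?_⟩
    intro x hx y hy a b ha hb hab
    have hm : a • x + b • y ∈ interior S := hS_conv.interior hx hy ha hb hab
    simp only [smul_eq_mul]
    apply le_of_tendsto_of_tendsto (((hptws x hx).const_mul a).add ((hptws y hy).const_mul b))
      (hptws _ hm)
    filter_upwards [hmemev x hx, hmemev y hy] with j hjx hjy
    have := (hφi_conc (σ j)).2 hjx hjy ha hb hab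
    simpa [smul_eq_mul] using this
  have hlip0 : ∀ (c : EuclideanSpace ℝ (Fin n)) (r : ℝ), 0 < r → (∀ᶠ j in atTop, closedBall c (2*r) ⊆ Si (σ j)) →
      ∀ x, x ∈ closedBall c r → x ∈ interior S → ∀ y, y ∈ closedBall c r → y ∈ interior S →
      |φ0 x - φ0 y| ≤ dist x y / r := by
    intro c r hr0 hev x hxc hxi y hyc hyi
    have h1 := hptws x hxi
    have h2 := hptws y hyi
    have ha : φ0 x - φ0 y ≤ dist x y / r := by
      apply le_of_tendsto (h1.sub h2)
      filter_upwards [hev] with j hj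
      exact concave_lip (hφi_conc (σ j)) (hφi_range (σ j)) hr0 hj x hxc y hyc
    have hb : φ0 y - φ0 x ≤ dist x y / r := by
      apply le_of_tendsto (h2.sub h1)
      filter_upwards [hev] with j hj
      have := concave_lip (hφi_conc (σ j)) (hφi_range (σ j)) hr0 hj y hyc x hxc
      rwa [dist_comm y x] at this
    rw [abs_sub_le_iff]
    exact ⟨ha, hb⟩
  have hcont : ∀ x ∈ interior S, ContinuousAt φ0 x := by
    intro x hx
    obtain ⟨r, hr0, hrint, hrev⟩ := hmargin {x} (singleton_subset_iff.2 hx) isCompact_singleton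
    rw [Metric.continuousAt_iff]
    intro ε hε
    refine ⟨min r (ε*r/2), lt_min hr0 (by positivity), ?_⟩
    intro y hy
    have hyr : y ∈ closedBall x r := by
      rw [mem_closedBall]
      exact le_of_lt (lt_of_lt_of_le hy (min_le_left _ _))
    have hyint : y ∈ interior S := by
      apply hrint x rfl
      exact closedBall_subset_closedBall (by linarith) hyr
    have := hlip0 x r hr0 ((hσ_at.eventually hrev).mono (fun j hj => hj x rfl)) y hyr hyint
      x (mem_closedBall_self hr0.le) hx
    rw [Real.dist_eq]
    calc |φ0 y - φ0 x| ≤ dist y x / r := this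
    _ < ε := by
        rw [div_lt_iff₀ hr0]
        have := lt_of_lt_of_le hy (min_le_right _ _)
        nlinarith
  -- uniform convergence on compact subsets of the interior, towards φ0
  have hunif : ∀ K : Set (EuclideanSpace ℝ (Fin n)), K ⊆ interior S → IsCompact K →
      TendstoUniformlyOn (fun j => φi (σ j)) φ0 atTop K := by
    intro K hK hKc
    rw [Metric.tendstoUniformlyOn_iff]
    intro ε hε
    obtain ⟨r, hr0, hrint, hrev⟩ := hmargin K hK hKc
    set ρ := min r (ε*r/8) with hρ
    have hρ0 : 0 < ρ := lt_min hr0 (by positivity)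
    have hcover : K ⊆ ⋃ y : K, ball (y:EuclideanSpace ℝ (Fin n)) ρ := fun x hx =>
      mem_iUnion.2 ⟨⟨x, hx⟩, mem_ball_self hρ0⟩
    obtain ⟨t, ht⟩ := hKc.elim_finite_subcover (fun y : K => ball (y:EuclideanSpace ℝ (Fin n)) ρ)
      (fun _ => isOpen_ball) hcover
    have hev1 : ∀ᶠ j in atTop, ∀ y ∈ K, closedBall y (2*r) ⊆ Si (σ j) := hσ_at.eventually hrev
    have hev2 : ∀ᶠ j in atTop, ∀ y ∈ t, dist (φi (σ j) (y:EuclideanSpace ℝ (Fin n))) (φ0 (y:EuclideanSpace ℝ (Fin n))) < ε/2 := by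
      rw [eventually_all_finset]
      intro y hy
      exact (Metric.tendsto_nhds.1 (hptws (y:EuclideanSpace ℝ (Fin n)) (hK y.2))) (ε/2) (by positivity)
    filter_upwards [hev1, hev2] with j h1 h2
    intro x hx
    obtain ⟨y, hyt, hxy⟩ := mem_iUnion₂.1 (ht hx)
    rw [mem_ball] at hxy
    have hxyr : x ∈ closedBall (y:EuclideanSpace ℝ (Fin n)) r := by
      rw [mem_closedBall]
      exact le_of_lt (lt_of_lt_of_le hxy (min_le_left _ _))
    have hbd : dist x (y:EuclideanSpace ℝ (Fin n)) / r ≤ ε/8 := by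
      rw [div_le_iff₀ hr0]
      have := lt_of_lt_of_le hxy (min_le_right _ _)
      nlinarith
    have hφ0bd : |φ0 x - φ0 (y:EuclideanSpace ℝ (Fin n))| ≤ dist x (y:EuclideanSpace ℝ (Fin n)) / r :=
      hlip0 (y:EuclideanSpace ℝ (Fin n)) r hr0 ((hσ_at.eventually hrev).mono (fun j' hj' => hj' (y:EuclideanSpace ℝ (Fin n)) y.2))
        x hxyr (hK hx) (y:EuclideanSpace ℝ (Fin n)) (mem_closedBall_self hr0.le) (hK y.2)
    have hsub : closedBall (y:EuclideanSpace ℝ (Fin n)) (2*r) ⊆ Si (σ j) := h1 (y:EuclideanSpace ℝ (Fin n)) y.2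
    have hφibd1 := concave_lip (hφi_conc (σ j)) (hφi_range (σ j)) hr0 hsub
      (y:EuclideanSpace ℝ (Fin n)) (mem_closedBall_self hr0.le) x hxyr
    have hφibd2 := concave_lip (hφi_conc (σ j)) (hφi_range (σ j)) hr0 hsub
      x hxyr (y:EuclideanSpace ℝ (Fin n)) (mem_closedBall_self hr0.le)
    rw [dist_comm (y:EuclideanSpace ℝ (Fin n)) x] at hφibd1
    have hcen := h2 y hyt
    rw [Real.dist_eq] at hcen ⊢
    rw [abs_sub_le_iff] at hφ0bd
    have habs : |φ0 x - φi (σ j) x| ≤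
        |φ0 x - φ0 (y:EuclideanSpace ℝ (Fin n))| + (|φ0 (y:EuclideanSpace ℝ (Fin n)) - φi (σ j) (y:EuclideanSpace ℝ (Fin n))| + |φi (σ j) (y:EuclideanSpace ℝ (Fin n)) - φi (σ j) x|) := by
      have u1 := abs_sub_le (φ0 x) (φ0 (y:EuclideanSpace ℝ (Fin n))) (φi (σ j) x)
      have u2 := abs_sub_le (φ0 (y:EuclideanSpace ℝ (Fin n))) (φi (σ j) (y:EuclideanSpace ℝ (Fin n))) (φi (σ j) x)
      linarith
    have hc1 : |φ0 x - φ0 (y:EuclideanSpace ℝ (Fin n))| ≤ ε/8 := by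
      rw [abs_sub_le_iff]; constructor <;> linarith [hφ0bd.1, hφ0bd.2]
    have hc2 : |φ0 (y:EuclideanSpace ℝ (Fin n)) - φi (σ j) (y:EuclideanSpace ℝ (Fin n))| < ε/2 := by rw [abs_sub_comm]; exact hcen
    have hc3 : |φi (σ j) (y:EuclideanSpace ℝ (Fin n)) - φi (σ j) x| ≤ ε/8 := by
      rw [abs_sub_le_iff]; constructor <;> linarith
    linarith
  -- the sequence of parameters going to 0
  set tk : ℕ → ℝ := fun k => ((k:ℝ)+2)⁻¹ with htk
  have htk0 : ∀ k, 0 < tk k := fun k => by rw [htk]; positivity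
  have htkh : ∀ k, tk k ≤ 1/2 := by
    intro k
    rw [htk]
    simp only
    rw [show (1:ℝ)/2 = (2:ℝ)⁻¹ by norm_num]
    apply inv_anti₀ (by norm_num)
    have : (0:ℝ) ≤ (k:ℝ) := Nat.cast_nonneg k
    linarith
  have htkanti : Antitone tk := by
    intro a b hab
    rw [htk]
    simp only
    apply inv_anti₀ (by positivity)
    have : (a:ℝ) ≤ (b:ℝ) := Nat.cast_le.2 hab
    linarith
  have htklim : Tendsto tk atTop (𝓝 0) := by
    have h1 : Tendsto (fun k:ℕ => ((k:ℝ)+2)) atTop atTop :=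
      tendsto_atTop_add_const_right _ 2 tendsto_natCast_atTop_atTop
    exact h1.inv_tendsto_atTop
  have h1mt : Tendsto (fun k => 1 - tk k) atTop (𝓝 1) := by
    have h0 : Tendsto (fun _ : ℕ => (1:ℝ)) atTop (𝓝 1) := tendsto_const_nhds
    simpa using h0.sub htklim
  set P : EuclideanSpace ℝ (Fin n) → ℕ → EuclideanSpace ℝ (Fin n) := fun x k => (1 - tk k) • x + tk k • z with hP
  have hpmem : ∀ x ∈ S, ∀ k, P x k ∈ interior S := by
    intro x hx k
    have := hS_conv.combo_interior_closure_mem_interior hz (subset_closure hx)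
      (htk0 k) (by linarith [htkh k] : (0:ℝ) ≤ 1 - tk k) (by ring)
    rw [hP]
    simp only
    rw [add_comm]
    exact this
  set G : EuclideanSpace ℝ (Fin n) → ℕ → ℝ := fun x k => (φ0 (P x k) - φ0 z) / (1 - tk k) with hG
  have h1mtpos : ∀ k, (0:ℝ) < 1 - tk k := fun k => by linarith [htkh k]
  have hGanti : ∀ x ∈ S, Antitone (G x) := by
    intro x hx k k' hkk'
    have ht' : tk k' ≤ tk k := htkanti hkk'
    set a := φ0 (P x k') with hha
    set b := φ0 (P x k) with hhb
    set c := φ0 z with hhc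
    have hlpos : (0:ℝ) < (1 - tk k)/(1 - tk k') := by
      have := h1mtpos k; have := h1mtpos k'; positivity
    have hlle : (1 - tk k)/(1 - tk k') ≤ 1 := by
      rw [div_le_one (h1mtpos k')]; linarith
    have hcomb : ((1 - tk k)/(1 - tk k')) • (P x k') + (1 - (1 - tk k)/(1 - tk k')) • z = P x k := by
      rw [hP]
      simp only
      rw [smul_add, smul_smul, smul_smul]
      have hne : (1 - tk k') ≠ 0 := (h1mtpos k').ne'
      have e1 : (1 - tk k)/(1 - tk k') * (1 - tk k') = 1 - tk k := by
        field_simp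
      have e2 : (1 - tk k)/(1 - tk k') * tk k' + (1 - (1 - tk k)/(1 - tk k')) = tk k := by
        field_simp
        ring
      rw [e1]
      rw [add_assoc, ← add_smul, e2]
    have hconc := hφ0_conc.2 (hpmem x hx k') hz hlpos.le
      (by linarith : (0:ℝ) ≤ 1 - (1 - tk k)/(1 - tk k')) (by ring)
    rw [hcomb] at hconc
    simp only [smul_eq_mul] at hconc
    rw [hG]
    simp only
    rw [div_le_div_iff₀ (h1mtpos k') (h1mtpos k)]
    have hexp : (1 - tk k)/(1 - tk k') * a + (1 - (1 - tk k)/(1 - tk k')) * c ≤ b := hconc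
    have hne : (1 - tk k') ≠ 0 := (h1mtpos k').ne'
    have h7 := mul_le_mul_of_nonneg_left hexp (h1mtpos k').le
    have h8 : (1 - tk k') * ((1 - tk k)/(1 - tk k') * a + (1 - (1 - tk k)/(1 - tk k')) * c) =
        (1 - tk k) * a + ((1 - tk k') - (1 - tk k)) * c := by
      field_simp
    rw [h8] at h7
    nlinarith [h7]
  have hGbdd : ∀ x ∈ S, BddBelow (range (G x)) := by
    intro x hx
    refine ⟨-2, ?_⟩
    rintro q ⟨k, rfl⟩
    rw [hG]
    simp only
    rw [le_div_iff₀ (h1mtpos k)]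
    have ha := (hφ0_Icc (P x k) (hpmem x hx k)).1
    have hc := (hφ0_Icc z hz).2
    have := htkh k
    nlinarith
  set φ : EuclideanSpace ℝ (Fin n) → ℝ := fun x => φ0 z + ⨅ k, G x k with hφ
  have htendφ : ∀ x ∈ S, Tendsto (fun k => φ0 (P x k)) atTop (𝓝 (φ x)) := by
    intro x hx
    have h1 : Tendsto (G x) atTop (𝓝 (⨅ k, G x k)) := tendsto_atTop_ciInf (hGanti x hx) (hGbdd x hx)
    have h3 : Tendsto (fun k => φ0 z + (1 - tk k) * G x k) atTop
        (𝓝 (φ0 z + 1 * (⨅ k, G x k))) := tendsto_const_nhds.add (h1mt.mul h1)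
    have heq : ∀ k, φ0 z + (1 - tk k) * G x k = φ0 (P x k) := by
      intro k
      have hne := (h1mtpos k).ne'
      rw [hG]
      simp only
      field_simp
      ring
    rw [one_mul] at h3
    have hφx : φ x = φ0 z + (⨅ k, G x k) := rfl
    rw [hφx]
    exact h3.congr heq
  have hφIcc : ∀ x ∈ S, φ x ∈ Icc (0:ℝ) 1 := by
    intro x hx
    have h := htendφ x hx
    have hev : ∀ k, φ0 (P x k) ∈ Icc (0:ℝ) 1 := fun k => hφ0_Icc _ (hpmem x hx k)
    exact ⟨ge_of_tendsto h (Eventually.of_forall (fun k => (hev k).1)),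
           le_of_tendsto h (Eventually.of_forall (fun k => (hev k).2))⟩
  have hφeq : ∀ x ∈ interior S, φ x = φ0 x := by
    intro x hx
    have h2 : Tendsto (fun k => P x k) atTop (𝓝 x) := by
      have := (h1mt.smul_const x).add (htklim.smul_const z)
      simpa using this
    have h3 : Tendsto (fun k => φ0 (P x k)) atTop (𝓝 (φ0 x)) := (hcont x hx).tendsto.comp h2
    exact tendsto_nhds_unique (htendφ x (interior_subset hx)) h3
  have hφconc : ConcaveOn ℝ S φ := by
    refine ⟨hS_conv, ?_⟩
    intro x hx y hy a b ha hb hab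
    have hm : a • x + b • y ∈ S := hS_conv hx hy ha hb hab
    simp only [smul_eq_mul]
    apply le_of_tendsto_of_tendsto' (((htendφ x hx).const_mul a).add ((htendφ y hy).const_mul b))
      (htendφ _ hm)
    intro k
    have hdist : P (a • x + b • y) k = a • P x k + b • P y k := by
      have hmod : a • ((1 - tk k) • x + tk k • z) + b • ((1 - tk k) • y + tk k • z) =
          (1 - tk k) • (a • x + b • y) + (a + b) • (tk k • z) := by module
      rw [hP]
      simp only
      rw [hmod, hab, one_smul]
    have := hφ0_conc.2 (hpmem x hx k) (hpmem y hy k) ha hb hab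
    rw [← hdist] at this
    simpa [smul_eq_mul] using this
  refine ⟨φ, σ, hσmono, hφIcc, hφconc, ?_, ?_⟩
  · intro K hK hKc
    exact (hunif K hK hKc).congr_right (fun x hx => (hφeq x (hK hx)).symm)
  · intro x hxfr xj hxj hxjlim
    have hxS : x ∈ S := hS_compact.isClosed.frontier_subset hxfr
    have hzev : ∀ᶠ j in atTop, z ∈ Si (σ j) := hmemev z hz
    have hkey : ∀ k, (1 - tk k) * limsup (fun j => φi (σ j) (xj j)) atTop ≤ φ0 (P x k) := by
      intro k
      set q := P x k with hq
      have hqint : q ∈ interior S := hpmem x hxS k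
      set yj : ℕ → EuclideanSpace ℝ (Fin n) := fun j => (1 - tk k) • xj j + tk k • z with hyj
      have hevconc : ∀ᶠ j in atTop,
          (1 - tk k) * φi (σ j) (xj j) ≤ φi (σ j) (yj j) ∧ yj j ∈ Si (σ j) := by
        filter_upwards [hzev] with j hjz
        have hc := (hφi_conc (σ j)).2 (hxj j) hjz
          (by linarith [htkh k] : (0:ℝ) ≤ 1 - tk k) (htk0 k).le (by ring)
        have hmem : yj j ∈ Si (σ j) := (hSi_conv (σ j)) (hxj j) hjz
          (by linarith [htkh k] : (0:ℝ) ≤ 1 - tk k) (htk0 k).le (by ring)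
        constructor
        · have hz0 := (hφi_range (σ j) z hjz).1
          simp only [smul_eq_mul] at hc
          have : (1 - tk k) * φi (σ j) (xj j) ≤
              (1 - tk k) * φi (σ j) (xj j) + tk k * φi (σ j) z := by
            nlinarith [(htk0 k).le]
          calc (1 - tk k) * φi (σ j) (xj j) ≤
              (1 - tk k) * φi (σ j) (xj j) + tk k * φi (σ j) z := this
            _ ≤ φi (σ j) (yj j) := hc
        · exact hmem
      have hylim : Tendsto yj atTop (𝓝 q) := by
        have := (hxjlim.const_smul ((1:ℝ) - tk k)).add (tendsto_const_nhds (x := tk k • z))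
        exact this
      obtain ⟨ρq, hρq0, hρqsub⟩ := Metric.isOpen_iff.1 isOpen_interior q hqint
      set K : Set (EuclideanSpace ℝ (Fin n)) := closedBall q (ρq/2) with hK
      have hKint : K ⊆ interior S := by
        intro v hv
        apply hρqsub
        rw [mem_ball]
        rw [hK, mem_closedBall] at hv
        linarith
      have hKc : IsCompact K := isCompact_closedBall _ _
      have huf := hunif K hKint hKc
      rw [Metric.tendstoUniformlyOn_iff] at huf
      have hKnhds : K ∈ 𝓝 q := by
        rw [hK]
        exact closedBall_mem_nhds q (by positivity)
      have hyK : ∀ᶠ j in atTop, yj j ∈ K :=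
        hylim.eventually (eventually_of_mem hKnhds (fun v hv => hv))
      have hφylim : Tendsto (fun j => φi (σ j) (yj j)) atTop (𝓝 (φ0 q)) := by
        have hcq : Tendsto (fun j => φ0 (yj j)) atTop (𝓝 (φ0 q)) :=
          (hcont q hqint).tendsto.comp hylim
        apply hcq.congr_dist
        rw [Metric.tendsto_nhds]
        intro ε hε
        filter_upwards [huf ε hε, hyK] with j hj hjK
        rw [Real.dist_eq, sub_zero, abs_of_nonneg dist_nonneg]
        exact hj (yj j) hjK
      have hbub : IsBoundedUnder (· ≤ ·) atTop (fun j => φi (σ j) (yj j)) :=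
        hφylim.isBoundedUnder_le
      have hcob : IsCoboundedUnder (· ≤ ·) atTop (fun j => φi (σ j) (xj j)) := by
        apply IsBoundedUnder.isCoboundedUnder_le
        refine ⟨0, ?_⟩
        simp only [eventually_map]
        exact Eventually.of_forall (fun j => (hφi_range (σ j) (xj j) (hxj j)).1)
      have hbdv : IsBoundedUnder (· ≤ ·) atTop (fun j => φi (σ j) (yj j) / (1 - tk k)) :=
        (hφylim.div_const _).isBoundedUnder_le
      have hevdiv : ∀ᶠ j in atTop, φi (σ j) (xj j) ≤ φi (σ j) (yj j) / (1 - tk k) := by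
        filter_upwards [hevconc] with j hj
        rw [le_div_iff₀ (h1mtpos k)]
        nlinarith [hj.1]
      have h5 : limsup (fun j => φi (σ j) (xj j)) atTop ≤ φ0 q / (1 - tk k) := by
        calc limsup (fun j => φi (σ j) (xj j)) atTop
            ≤ limsup (fun j => φi (σ j) (yj j) / (1 - tk k)) atTop :=
              limsup_le_limsup hevdiv hcob hbdv
          _ = φ0 q / (1 - tk k) := (hφylim.div_const _).limsup_eq
      have h9 := (le_div_iff₀ (h1mtpos k)).1 h5
      rw [mul_comm]
      exact h9
    have hLlim : Tendsto (fun k => (1 - tk k) * limsup (fun j => φi (σ j) (xj j)) atTop)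
        atTop (𝓝 (limsup (fun j => φi (σ j) (xj j)) atTop)) := by
      have := h1mt.mul_const (limsup (fun j => φi (σ j) (xj j)) atTop)
      simpa using this
    exact le_of_tendsto_of_tendsto' hLlim (htendφ x hxS) hkey
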